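/- Let n ≥ 1 and let v, w : Fin n → ℝ² be two point lists, and set δ = max_{0 ≤ i ≤ n−1} ‖v_i − w_i‖. Then the symmetric difference conv{v_0, …, v_{n−1}} Δ conv{w_0, …, w_{n−1}} is contained in the set of points whose distance to the frontier of conv{v_0, …, v_{n−1}} is at most δ, i.e. in the closed δ-thickening of ∂(conv{v_i}). -/

import Mathlib

open Metric Set
local notation "⟪" x ", " y "⟫_ℝ" => (inner ℝ x y : ℝ)

lemma preconn_inter_frontier {E : Type*} [TopologicalSpace E] {s t : Set E}
    (hs : IsPreconnected s) (h1 : (s ∩ t).Nonempty) (h2 : (s \ t).Nonempty) :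
    (s ∩ frontier t).Nonempty := by
  by_contra hfr
  rw [Set.not_nonempty_iff_eq_empty] at hfr
  have hsub : s ⊆ interior t ∪ (closure t)ᶜ := by
    intro y hy
    have hy' : y ∉ frontier t := fun h =>
      Set.eq_empty_iff_forall_notMem.mp hfr y ⟨hy, h⟩
    by_cases hc : y ∈ closure t
    · left
      by_contra hint
      exact hy' ⟨hc, hint⟩
    · right; exact hc
  rcases hs.subset_or_subset isOpen_interior isClosed_closure.isOpen_compl
      (disjoint_compl_right.mono_left (interior_subset.trans subset_closure)) hsub with h | h
  · obtain ⟨p, hp⟩ := h2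
    exact hp.2 (interior_subset (h hp.1))
  · obtain ⟨p, hp⟩ := h1
    exact (h hp.1) (subset_closure hp.2)

/-- The symmetric difference of the convex hulls of two point lists `v, w` in the plane
is contained in the closed `δ`-thickening of the frontier of `conv{v i}`, where
`δ = max_i ‖v i - w i‖`. -/
theorem stmt10 (n : ℕ) (hn : 1 ≤ n) (v w : Fin n → EuclideanSpace ℝ (Fin 2)) :
    symmDiff (convexHull ℝ (Set.range v)) (convexHull ℝ (Set.range w)) ⊆
      {x | Metric.infDist x (frontier (convexHull ℝ (Set.range v))) ≤
        ⨆ i : Fin n, ‖v i - w i‖} := by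
  intro x hx
  set A := convexHull ℝ (Set.range v) with hA
  set B := convexHull ℝ (Set.range w) with hB
  set δ := ⨆ i : Fin n, ‖v i - w i‖ with hδ
  have i0 : Fin n := ⟨0, hn⟩
  have hle : ∀ i, ‖v i - w i‖ ≤ δ := fun i => le_ciSup (f := fun i => ‖v i - w i‖) (Set.Finite.bddAbove (Set.finite_range _)) i
  have hδ0 : 0 ≤ δ := le_trans (norm_nonneg _) (hle i0)
  have hAconv : Convex ℝ A := convex_convexHull ℝ _
  have hBconv : Convex ℝ B := convex_convexHull ℝ _
  have hAcompact : IsCompact A := (Set.finite_range v).isCompact_convexHull ℝ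
  have hBclosed : IsClosed B := ((Set.finite_range w).isCompact_convexHull ℝ).isClosed
  have hAne : A.Nonempty := ⟨v i0, subset_convexHull ℝ _ (Set.mem_range_self i0)⟩
  by_contra h
  simp only [Set.mem_setOf_eq, not_le] at h
  -- the closed ball of radius δ around x misses the frontier of A
  have hball : closedBall x δ ∩ frontier A = ∅ := by
    rw [Set.eq_empty_iff_forall_notMem]
    rintro y ⟨hy1, hy2⟩
    have := Metric.infDist_le_dist_of_mem (x := x) hy2
    rw [mem_closedBall, dist_comm] at hy1
    linarith
  have hpre : IsPreconnected (closedBall x δ) := (convex_closedBall x δ).isPreconnected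
  rw [Set.mem_symmDiff] at hx
  rcases hx with ⟨hxA, hxB⟩ | ⟨hxB, hxA⟩
  · -- x ∈ A \ B : closed ball ⊆ A, separate x from B
    have hsub : closedBall x δ ⊆ A := by
      intro p hp
      by_contra hpA
      obtain ⟨q, hq⟩ := preconn_inter_frontier hpre
        ⟨x, mem_closedBall_self hδ0, hxA⟩ ⟨p, hp, hpA⟩
      rw [Set.eq_empty_iff_forall_notMem] at hball
      exact hball q hq
    obtain ⟨f, u, hfu, hux⟩ := geometric_hahn_banach_closed_point hBconv hBclosed hxB
    set z := (InnerProductSpace.toDual ℝ (EuclideanSpace ℝ (Fin 2))).symm f with hzdef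
    have hfz : ∀ y, ⟪z, y⟫_ℝ = f y := fun y => InnerProductSpace.toDual_symm_apply
    have hz0 : z ≠ 0 := by
      intro hz
      have h1 : f (w i0) < u := hfu _ (subset_convexHull ℝ _ (Set.mem_range_self i0))
      have h2 : f (w i0) = 0 := by rw [← hfz, hz]; simp
      have h3 : f x = 0 := by rw [← hfz, hz]; simp
      linarith
    have hznorm : 0 < ‖z‖ := norm_pos_iff.mpr hz0
    set d : EuclideanSpace ℝ (Fin 2) := (δ / ‖z‖) • z with hd
    have hdn : ‖d‖ = δ := by
      rw [hd, norm_smul, Real.norm_eq_abs, abs_of_nonneg (div_nonneg hδ0 hznorm.le),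
        div_mul_cancel₀ _ hznorm.ne']
    have hxd : x + d ∈ A := hsub (by
      rw [mem_closedBall, dist_eq_norm, add_sub_cancel_left, hdn])
    have hfd : ⟪z, d⟫_ℝ = δ * ‖z‖ := by
      rw [hd, real_inner_smul_right, real_inner_self_eq_norm_sq]
      field_simp
    -- A is contained in the half-space { y | f y ≤ u + ‖z‖ * δ }
    have hAsub : A ⊆ {y | f y ≤ u + ‖z‖ * δ} := by
      rw [hA]
      apply convexHull_min
      · rintro _ ⟨i, rfl⟩
        have h1 : f (w i) < u := hfu _ (subset_convexHull ℝ _ (Set.mem_range_self i))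
        have h2 : f (v i) - f (w i) = ⟪z, v i - w i⟫_ℝ := by
          rw [hfz]; simp [map_sub]
        have h3 : ⟪z, v i - w i⟫_ℝ ≤ ‖z‖ * ‖v i - w i‖ := real_inner_le_norm z _
        have h4 : ‖z‖ * ‖v i - w i‖ ≤ ‖z‖ * δ :=
          mul_le_mul_of_nonneg_left (hle i) hznorm.le
        simp only [Set.mem_setOf_eq]
        linarith
      · exact convex_halfSpace_le ⟨fun a b => map_add f a b, fun c a => map_smul f c a⟩ _
    have hfin : f (x + d) ≤ u + ‖z‖ * δ := hAsub hxd
    have : f (x + d) = f x + δ * ‖z‖ := by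
      rw [map_add, ← hfz d, hfd]
    linarith [hux]
  · -- x ∈ B \ A : B is within δ of A, nearest point of A lies in the ball, contradiction
    have hBsub : B ⊆ cthickening δ A := by
      rw [hB]
      apply convexHull_min
      · rintro _ ⟨i, rfl⟩
        refine Metric.mem_cthickening_of_dist_le (w i) (v i) δ _
          (subset_convexHull ℝ _ (Set.mem_range_self i)) ?_
        rw [dist_eq_norm, ← norm_neg]
        simpa using hle i
      · exact hAconv.cthickening δ
    have hxd : Metric.infDist x A ≤ δ := by
      have h1 := Metric.mem_cthickening_iff.mp (hBsub hxB)
      rw [Metric.infDist]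
      calc (EMetric.infEdist x A).toReal ≤ (ENNReal.ofReal δ).toReal :=
            ENNReal.toReal_mono ENNReal.ofReal_ne_top h1
        _ = δ := ENNReal.toReal_ofReal hδ0
    obtain ⟨y, hyA, hyd⟩ := hAcompact.exists_infDist_eq_dist hAne x
    have hyball : y ∈ closedBall x δ := by
      rw [mem_closedBall, dist_comm, ← hyd]; exact hxd
    obtain ⟨q, hq⟩ := preconn_inter_frontier hpre ⟨y, hyball, hyA⟩
      ⟨x, mem_closedBall_self hδ0, hxA⟩
    rw [Set.eq_empty_iff_forall_notMem] at hball
    exact hball q hq
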